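/- Let q be a prime power and K an algebraically closed field containing F_q. Let P(V) be the projectivization of the span of x^{q+1}, x^q, x, 1, with the PGL_2(K)-action g⋆f(x) = (cx+d)^{q+1} f((ax+b)/(cx+d)) for g = [[a,b],[c,d]]. Let S ⊆ P(V) be the quadric αδ = βγ. Then P(V) \ S is exactly the PGL_2(K)-orbit of x^q - x. -/

import Mathlib

open Polynomial

section OrbitAux

variable {K : Type*} [Field K]

/-- Membership in the `PGL₂`-orbit of `x^q - x`, expressed on coefficients. -/
def OrbXq (q : ℕ) (α β γ δ : K) : Prop :=
  ∃ a b c d e : K, a*d - b*c ≠ 0 ∧ e ≠ 0 ∧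
    e*α = a^q*c - a*c^q ∧ e*β = a^q*d - b*c^q ∧
    e*γ = b^q*c - a*d^q ∧ e*δ = b^q*d - b*d^q

lemma frobAux_sub (q : ℕ) (hF : ∀ x y : K, (x + y) ^ q = x ^ q + y ^ q)
    (x y : K) : (x - y) ^ q = x ^ q - y ^ q := by
  have h := hF (x - y) y
  rw [sub_add_cancel] at h
  linear_combination -h

lemma frobAux_sub_mul (q : ℕ) (hF : ∀ x y : K, (x + y) ^ q = x ^ q + y ^ q)
    (x y z w : K) : (x*y - z*w) ^ q = x^q*y^q - z^q*w^q := by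
  rw [frobAux_sub q hF, mul_pow, mul_pow]

/-- Twisted congruence step: if `N' = P^{(q)T} N P` with `P` invertible and `N'` is in the
orbit, then so is `N`. -/
lemma orbXq_congr_step (q : ℕ) (hF : ∀ x y : K, (x + y) ^ q = x ^ q + y ^ q)
    (α β γ δ α' β' γ' δ' p₁ p₂ p₃ p₄ : K) (hP : p₁*p₄ - p₂*p₃ ≠ 0)
    (h1 : α' = (p₁^q*α + p₃^q*γ)*p₁ + (p₁^q*β + p₃^q*δ)*p₃)
    (h2 : β' = (p₁^q*α + p₃^q*γ)*p₂ + (p₁^q*β + p₃^q*δ)*p₄)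
    (h3 : γ' = (p₂^q*α + p₄^q*γ)*p₁ + (p₂^q*β + p₄^q*δ)*p₃)
    (h4 : δ' = (p₂^q*α + p₄^q*γ)*p₂ + (p₂^q*β + p₄^q*δ)*p₄)
    (horb : OrbXq q α' β' γ' δ') : OrbXq q α β γ δ := by
  obtain ⟨a, b, c, d, e, hdet, he, e1, e2, e3, e4⟩ := horb
  subst h1 h2 h3 h4
  refine ⟨a*p₄ - b*p₃, b*p₁ - a*p₂, c*p₄ - d*p₃, d*p₁ - c*p₂,
    e * ((p₁^q*p₄^q - p₂^q*p₃^q) * (p₁*p₄ - p₂*p₃)), ?_, ?_, ?_, ?_, ?_, ?_⟩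
  · have h : (a*p₄ - b*p₃)*(d*p₁ - c*p₂) - (b*p₁ - a*p₂)*(c*p₄ - d*p₃)
        = (a*d - b*c)*(p₁*p₄ - p₂*p₃) := by ring
    rw [h]
    exact mul_ne_zero hdet hP
  · refine mul_ne_zero he (mul_ne_zero ?_ hP)
    rw [← frobAux_sub_mul q hF]
    exact pow_ne_zero _ hP
  · rw [frobAux_sub_mul q hF a p₄ b p₃, frobAux_sub_mul q hF c p₄ d p₃]
    linear_combination (p₄^q*p₄)*e1 - (p₄^q*p₃)*e2 - (p₃^q*p₄)*e3 + (p₃^q*p₃)*e4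
  · rw [frobAux_sub_mul q hF a p₄ b p₃, frobAux_sub_mul q hF c p₄ d p₃]
    linear_combination (-(p₄^q*p₂))*e1 + (p₄^q*p₁)*e2 + (p₃^q*p₂)*e3 - (p₃^q*p₁)*e4
  · rw [frobAux_sub_mul q hF b p₁ a p₂, frobAux_sub_mul q hF d p₁ c p₂]
    linear_combination (-(p₂^q*p₄))*e1 + (p₂^q*p₃)*e2 + (p₁^q*p₄)*e3 - (p₁^q*p₃)*e4
  · rw [frobAux_sub_mul q hF b p₁ a p₂, frobAux_sub_mul q hF d p₁ c p₂]
    linear_combination (p₂^q*p₂)*e1 - (p₂^q*p₁)*e2 - (p₁^q*p₂)*e3 + (p₁^q*p₁)*e4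

lemma orbXq_base (q : ℕ) (hq2 : 2 ≤ q) (t : K) (ht : t ≠ 0) :
    OrbXq q 0 t (-t) 0 := by
  have hq0 : q ≠ 0 := by omega
  refine ⟨1, 0, 0, 1, t⁻¹, by norm_num, inv_ne_zero ht, ?_, ?_, ?_, ?_⟩ <;>
    simp [zero_pow hq0, inv_mul_cancel₀ ht]

lemma exists_root_degq [IsAlgClosed K] (q : ℕ) (hq2 : 2 ≤ q) (b c d : K) (hb : b ≠ 0) :
    ∃ s : K, b*s^q + c*s + d = 0 := by
  set P : K[X] := C b * X ^ q + C c * X + C d with hP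
  have hc : P.coeff q = b := by
    simp [hP, coeff_X, coeff_C, show q ≠ 1 by omega, show q ≠ 0 by omega,
      show ¬(1 = q) by omega, show ¬(0 = q) by omega]
  have hle : (q : WithBot ℕ) ≤ P.degree := le_degree_of_ne_zero (by rw [hc]; exact hb)
  have hdeg : P.degree ≠ 0 := by
    intro h
    rw [h] at hle
    exact absurd (by exact_mod_cast hle : q ≤ 0) (by omega)
  obtain ⟨s, hs⟩ := IsAlgClosed.exists_root P hdeg
  exact ⟨s, by simpa [hP] using hs⟩

lemma exists_root_degq1 [IsAlgClosed K] (q : ℕ) (hq2 : 2 ≤ q) (a b c d : K) :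
    ¬ (a = 0 ∧ b = 0) → ∃ s : K, a*s^(q+1) + b*s^q + c*s + d = 0 := by
  intro hab
  by_cases ha : a = 0
  · have hb : b ≠ 0 := fun h => hab ⟨ha, h⟩
    obtain ⟨s, hs⟩ := exists_root_degq q hq2 b c d hb
    exact ⟨s, by rw [ha]; linear_combination hs⟩
  set P : K[X] := C a * X ^ (q+1) + C b * X ^ q + C c * X + C d with hP
  have hc : P.coeff (q+1) = a := by
    simp [hP, coeff_X, coeff_C, show q+1 ≠ q by omega, show q+1 ≠ 1 by omega,
      show ¬(q = 0) by omega, show ¬(1 = q+1) by omega, show ¬(q = q+1) by omega]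
  have hle : ((q+1 : ℕ) : WithBot ℕ) ≤ P.degree := le_degree_of_ne_zero (by rw [hc]; exact ha)
  have hdeg : P.degree ≠ 0 := by
    intro h
    rw [h] at hle
    exact absurd (by exact_mod_cast hle : q + 1 ≤ 0) (by omega)
  obtain ⟨s, hs⟩ := IsAlgClosed.exists_root P hdeg
  exact ⟨s, by simpa [hP] using hs⟩

lemma orbXq_offdiag [IsAlgClosed K] (q : ℕ) (hq2 : 2 ≤ q)
    (hF : ∀ x y : K, (x + y) ^ q = x ^ q + y ^ q)
    (β γ : K) (hβ : β ≠ 0) (hγ : γ ≠ 0) : OrbXq q 0 β γ 0 := by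
  have hq0 : q ≠ 0 := by omega
  obtain ⟨u, hu⟩ := IsAlgClosed.exists_pow_nat_eq (-γ * β⁻¹) (n := q - 1) (by omega)
  have hu0 : u ≠ 0 := by
    intro h
    rw [h, zero_pow (by omega : q - 1 ≠ 0)] at hu
    field_simp at hu
    exact hγ (by linear_combination hu)
  have hkey : u * γ = -(u^q * β) := by
    have huq : u ^ q = u ^ (q-1) * u := by
      rw [← pow_succ]
      congr 1
      omega
    rw [huq, hu]
    field_simp
  have ht : u^q * β ≠ 0 := mul_ne_zero (pow_ne_zero _ hu0) hβ
  refine orbXq_congr_step q hF 0 β γ 0 0 (u^q*β) (-(u^q*β)) 0 u 0 0 1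
    (by simpa using hu0) ?_ ?_ ?_ ?_ (orbXq_base q hq2 _ ht)
  · simp [zero_pow hq0]
  · simp [zero_pow hq0]
  · simp only [zero_pow hq0, one_pow]
    linear_combination -hkey
  · simp [zero_pow hq0]

lemma orbXq_row [IsAlgClosed K] (q : ℕ) (hq2 : 2 ≤ q)
    (hF : ∀ x y : K, (x + y) ^ q = x ^ q + y ^ q)
    (β γ δ : K) (hβ : β ≠ 0) (hγ : γ ≠ 0) : OrbXq q 0 β γ δ := by
  have hq0 : q ≠ 0 := by omega
  obtain ⟨s, hs⟩ := exists_root_degq q hq2 β γ δ hβ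
  refine orbXq_congr_step q hF 0 β γ δ 0 β γ 0 1 s 0 1
    (by norm_num) ?_ ?_ ?_ ?_ (orbXq_offdiag q hq2 hF β γ hβ hγ)
  · simp [zero_pow hq0]
  · simp [zero_pow hq0]
  · simp [zero_pow hq0]
  · simp only [zero_pow hq0, one_pow]
    linear_combination -hs

lemma orbXq_of_det_ne [IsAlgClosed K] (q : ℕ) (hq2 : 2 ≤ q)
    (hF : ∀ x y : K, (x + y) ^ q = x ^ q + y ^ q)
    (α β γ δ : K) (hD : α*δ - β*γ ≠ 0) : OrbXq q α β γ δ := by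
  have hq0 : q ≠ 0 := by omega
  have hab : ¬ (α = 0 ∧ β = 0) := by
    rintro ⟨h1, h2⟩
    exact hD (by rw [h1, h2]; ring)
  obtain ⟨r, hr⟩ := exists_root_degq1 q hq2 α β γ δ hab
  have hprod : (r^q*α + γ) * (r*α + β) = -(α*δ - β*γ) := by
    linear_combination α * hr
  have hβ₁ : r^q*α + γ ≠ 0 := by
    intro h
    rw [h, zero_mul] at hprod
    exact hD (by linear_combination hprod)
  have hγ₁ : r*α + β ≠ 0 := by
    intro h
    rw [h, mul_zero] at hprod
    exact hD (by linear_combination hprod)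
  refine orbXq_congr_step q hF α β γ δ 0 (r^q*α + γ) (r*α + β) α r 1 1 0
    (by norm_num) ?_ ?_ ?_ ?_ (orbXq_row q hq2 hF _ _ α hβ₁ hγ₁)
  · simp only [one_pow]
    linear_combination -hr
  · simp only [one_pow]
    ring
  · simp only [one_pow, zero_pow hq0]
    ring
  · simp only [one_pow, zero_pow hq0]
    ring

lemma coeffsAux_eq (q : ℕ) (hq2 : 2 ≤ q) (A B G D A' B' G' D' : K)
    (h : C A * X^(q+1) + C B * X^q + C G * X + C D
       = C A' * X^(q+1) + C B' * X^q + C G' * X + C D') :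
    A = A' ∧ B = B' ∧ G = G' ∧ D = D' := by
  have e1 := congrArg (fun P : K[X] => P.coeff (q+1)) h
  have e2 := congrArg (fun P : K[X] => P.coeff q) h
  have e3 := congrArg (fun P : K[X] => P.coeff 1) h
  have e4 := congrArg (fun P : K[X] => P.coeff 0) h
  simp [coeff_X, coeff_C, show ¬(q = q+1) by omega, show ¬(q+1 = 1) by omega,
    show ¬(1 = q+1) by omega, show ¬(q = 0) by omega, show ¬(q = 1) by omega,
    show ¬(1 = q) by omega, show ¬(0 = q) by omega, show ¬(q+1 = q) by omega] at e1 e2 e3 e4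
  exact ⟨e1, e2, e3, e4⟩

end OrbitAux

/-- over an algebraically closed `K ⊇ F_q`, a nonzero class
`f = α x^(q+1) + β x^q + γ x + δ` (up to scalar) lies off the quadric `αδ = βγ` iff it
is in the `PGL₂(K)`-orbit of `x^q - x`, where `[[a,b],[c,d]] ⋆ (x^q - x) =
(ax+b)^q (cx+d) - (ax+b)(cx+d)^q`. -/
theorem orbit_of_xq_sub_x
    (p n : ℕ) (hp : p.Prime) (hn : n ≠ 0) (q : ℕ) (hq : q = p ^ n)
    (K : Type*) [Field K] [IsAlgClosed K] [CharP K p]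
    (α β γ δ : K) (hne : ¬ (α = 0 ∧ β = 0 ∧ γ = 0 ∧ δ = 0))
    (f : K[X]) (hf : f = C α * X ^ (q + 1) + C β * X ^ q + C γ * X + C δ) :
    α * δ ≠ β * γ ↔
      ∃ a b c d e : K, a * d - b * c ≠ 0 ∧ e ≠ 0 ∧
        C e * f = (C a * X + C b) ^ q * (C c * X + C d)
                  - (C a * X + C b) * (C c * X + C d) ^ q := by
  haveI := Fact.mk hp
  have hq2 : 2 ≤ q := by
    rw [hq]
    calc 2 ≤ p := hp.two_le
    _ = p ^ 1 := (pow_one p).symm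
    _ ≤ p ^ n := Nat.pow_le_pow_right hp.one_lt.le (by omega)
  have hFK : ∀ x y : K, (x + y) ^ q = x ^ q + y ^ q := by
    intro x y
    rw [hq]
    exact add_pow_char_pow x y p n
  have hFP : ∀ x y : K[X], (x + y) ^ q = x ^ q + y ^ q := by
    intro x y
    rw [hq]
    exact add_pow_char_pow x y p n
  have expand : ∀ a b c d : K,
      (C a * X + C b) ^ q * (C c * X + C d) - (C a * X + C b) * (C c * X + C d) ^ q
      = C (a^q*c - a*c^q) * X^(q+1) + C (a^q*d - b*c^q) * X^q
        + C (b^q*c - a*d^q) * X + C (b^q*d - b*d^q) := by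
    intro a b c d
    rw [hFP (C a * X) (C b), hFP (C c * X) (C d), mul_pow, mul_pow]
    simp only [map_sub, map_mul, map_pow]
    ring
  constructor
  · intro hD0
    have hD : α*δ - β*γ ≠ 0 := sub_ne_zero.mpr hD0
    obtain ⟨a, b, c, d, e, hdet, he, e1, e2, e3, e4⟩ :=
      orbXq_of_det_ne q hq2 hFK α β γ δ hD
    refine ⟨a, b, c, d, e, hdet, he, ?_⟩
    rw [expand, hf]
    have l1 : C e * C α = C (a^q*c - a*c^q) := by rw [← map_mul, e1]
    have l2 : C e * C β = C (a^q*d - b*c^q) := by rw [← map_mul, e2]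
    have l3 : C e * C γ = C (b^q*c - a*d^q) := by rw [← map_mul, e3]
    have l4 : C e * C δ = C (b^q*d - b*d^q) := by rw [← map_mul, e4]
    linear_combination (X : K[X])^(q+1) * l1 + (X : K[X])^q * l2 + (X : K[X]) * l3 + l4
  · rintro ⟨a, b, c, d, e, hdet, he, hpoly⟩
    rw [expand, hf] at hpoly
    have hL : C e * (C α * X ^ (q + 1) + C β * X ^ q + C γ * X + C δ)
        = C (e*α) * X^(q+1) + C (e*β) * X^q + C (e*γ) * X + C (e*δ) := by
      simp only [map_mul]
      ring
    rw [hL] at hpoly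
    obtain ⟨e1, e2, e3, e4⟩ := coeffsAux_eq q hq2 _ _ _ _ _ _ _ _ hpoly
    intro heq
    have h0 : e*e*(α*δ - β*γ) = (a^q*d^q - b^q*c^q)*(a*d - b*c) := by
      linear_combination (e*δ)*e1 + (a^q*c - a*c^q)*e4 - (e*γ)*e2 - (a^q*d - b*c^q)*e3
    rw [heq, sub_self, mul_zero] at h0
    have hnz : (a^q*d^q - b^q*c^q)*(a*d - b*c) ≠ 0 := by
      rw [← frobAux_sub_mul q hFK]
      exact mul_ne_zero (pow_ne_zero _ hdet) hdet
    exact hnz h0.symm
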